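/- For a prime p ≠ 3, p ≠ 2, the polynomial T^8 - p^2 T^4 + p^4 is irreducible over ℚ, and its roots are exactly the numbers ζ_8^{2m+1} ζ_3^{±1} √p for m = 0,1,2,3, where ζ_8 and ζ_3 are primitive 8th and 3rd roots of unity. -/

import Mathlib

set_option maxHeartbeats 1600000
set_option synthInstance.maxHeartbeats 400000

open Polynomial Complex IntermediateField Module

lemma aux_min_deg_two {K : Type*} [Field K] [Algebra K ℂ] (x : ℂ) (c : K)
    (hc : algebraMap K ℂ c = x ^ 2) (hx : x ∉ Set.range (algebraMap K ℂ)) :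
    IsIntegral K x ∧ (minpoly K x).natDegree = 2 := by
  have hq : (X ^ 2 - C c : K[X]).Monic := by monicity!
  have hev : Polynomial.aeval x (X ^ 2 - C c : K[X]) = 0 := by
    simp [hc]
  have hint : IsIntegral K x := ⟨_, hq, by simpa [Polynomial.aeval_def] using hev⟩
  refine ⟨hint, ?_⟩
  have hdvd := minpoly.dvd K x hev
  have hle : (minpoly K x).natDegree ≤ 2 := by
    have := Polynomial.natDegree_le_of_dvd hdvd hq.ne_zero
    simpa [Polynomial.natDegree_X_pow_sub_C] using this
  have h1 : (minpoly K x).natDegree ≠ 1 := by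
    intro h
    have hd : (minpoly K x).degree = 1 := by
      rw [Polynomial.degree_eq_natDegree (minpoly.ne_zero hint), h]
      rfl
    exact hx (minpoly.degree_eq_one_iff.1 hd)
  have h0 : 0 < (minpoly K x).natDegree := minpoly.natDegree_pos hint
  omega

lemma aux_rep_two (x : ℂ) (hx : IsIntegral ℚ x) (h2 : (minpoly ℚ x).natDegree = 2)
    {y : ℂ} (hy : y ∈ (ℚ⟮x⟯ : IntermediateField ℚ ℂ)) : ∃ c0 c1 : ℚ, y = c0 + c1 * x := by
  let pb := IntermediateField.adjoin.powerBasis hx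
  have hdim : pb.dim = 2 := by
    simpa [pb, IntermediateField.adjoin.powerBasis] using h2
  set Y : ℚ⟮x⟯ := ⟨y, hy⟩ with hY
  have hsum := pb.basis.sum_repr Y
  rw [Fintype.sum_equiv (finCongr hdim) _ (fun i => pb.basis.repr Y ((finCongr hdim).symm i) • pb.basis ((finCongr hdim).symm i)) (fun i => by simp)] at hsum
  rw [Fin.sum_univ_two] at hsum
  refine ⟨pb.basis.repr Y ((finCongr hdim).symm 0), pb.basis.repr Y ((finCongr hdim).symm 1), ?_⟩
  have hcoe := congrArg (algebraMap (ℚ⟮x⟯ : IntermediateField ℚ ℂ) ℂ) hsum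
  rw [map_add] at hcoe
  have hb : ∀ (i : Fin pb.dim) (c : ℚ), algebraMap (ℚ⟮x⟯ : IntermediateField ℚ ℂ) ℂ (c • pb.basis i) = c * x ^ (i : ℕ) := by
    intro i c
    rw [pb.basis_eq_pow, Algebra.smul_def, map_mul, map_pow]
    have hgen : algebraMap (ℚ⟮x⟯ : IntermediateField ℚ ℂ) ℂ pb.gen = x := by
      simp [pb, IntermediateField.adjoin.powerBasis]
    rw [hgen, ← IsScalarTower.algebraMap_apply]
    norm_num
  rw [hb, hb] at hcoe
  have hYy : algebraMap (ℚ⟮x⟯ : IntermediateField ℚ ℂ) ℂ Y = y := rfl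
  rw [hYy] at hcoe
  simp only [finCongr_symm, finCongr_apply] at hcoe ⊢
  rw [← hcoe]
  norm_num

lemma aux_irr {x : ℝ} (hx : Irrational x) : (x : ℂ) ∉ Set.range (algebraMap ℚ ℂ) := by
  rintro ⟨q, hq⟩
  refine hx ⟨q, ?_⟩
  have : ((q : ℝ) : ℂ) = (x : ℂ) := by rw [← hq]; norm_cast
  exact_mod_cast this

theorem stmt_17 (p : ℕ) (hp : p.Prime) (hp2 : p ≠ 2) (hp3 : p ≠ 3) :
    Irreducible ((X : ℚ[X]) ^ 8 - C ((p : ℚ)) ^ 2 * X ^ 4 + C ((p : ℚ)) ^ 4) ∧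
    {z : ℂ | z ^ 8 - (p : ℂ) ^ 2 * z ^ 4 + (p : ℂ) ^ 4 = 0}
      = {z : ℂ | ∃ m : Fin 4,
          z = Complex.exp (2 * Real.pi * Complex.I / 8) ^ (2 * (m : ℕ) + 1) *
              Complex.exp (2 * Real.pi * Complex.I / 3) * (Real.sqrt p : ℂ) ∨
          z = Complex.exp (2 * Real.pi * Complex.I / 8) ^ (2 * (m : ℕ) + 1) *
              (Complex.exp (2 * Real.pi * Complex.I / 3))⁻¹ * (Real.sqrt p : ℂ)} := by
  have hppos : (0:ℝ) < p := by exact_mod_cast hp.pos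
  set a := Complex.exp (2 * Real.pi * Complex.I / 8) with ha_def
  set b := Complex.exp (2 * Real.pi * Complex.I / 3) with hb_def
  set s := ((Real.sqrt p : ℝ) : ℂ) with hs_def
  have ha4 : a ^ 4 = -1 := by
    rw [ha_def, ← Complex.exp_nat_mul]
    rw [show (4 : ℕ) * (2 * (Real.pi : ℂ) * Complex.I / 8) = Real.pi * Complex.I by push_cast; ring]
    exact Complex.exp_pi_mul_I
  have hb3 : b ^ 3 = 1 := by
    rw [hb_def, ← Complex.exp_nat_mul]
    rw [show (3 : ℕ) * (2 * (Real.pi : ℂ) * Complex.I / 3) = 2 * Real.pi * Complex.I by push_cast; ring]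
    exact Complex.exp_two_pi_mul_I
  have hbne : b ≠ 1 := (Complex.isPrimitiveRoot_exp 3 (by norm_num)).ne_one (by norm_num)
  have hb1 : b ^ 2 + b + 1 = 0 := by
    have h := mul_eq_zero.1 (show (b - 1) * (b ^ 2 + b + 1) = 0 by linear_combination hb3)
    rcases h with h | h
    · exact absurd (sub_eq_zero.1 h) hbne
    · exact h
  have hs2 : s ^ 2 = (p : ℂ) := by
    rw [hs_def]; norm_cast; rw [Real.sq_sqrt hppos.le]
  have hb0 : b ≠ 0 := Complex.exp_ne_zero _
  constructor
  · -- irreducibility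
    set α : ℂ := a * b * s with hα_def
    set ζ : ℂ := Complex.exp (2 * Real.pi * Complex.I / 12) ^ 11 with hζ_def
    have hζprim : IsPrimitiveRoot ζ 12 :=
      (Complex.isPrimitiveRoot_exp 12 (by norm_num)).pow_of_coprime 11 (by norm_num)
    have hζab : ζ = a ^ 2 * b ^ 2 := by
      rw [hζ_def, ha_def, hb_def, ← Complex.exp_nat_mul, ← Complex.exp_nat_mul,
        ← Complex.exp_nat_mul, ← Complex.exp_add]
      congr 1
      push_cast; ring
    have hζint : IsIntegral ℚ ζ := by
      refine ⟨X ^ 12 - 1, by monicity!, ?_⟩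
      simp [Polynomial.eval₂_sub, hζprim.pow_eq_one]
    have hminζ : minpoly ℚ ζ = Polynomial.cyclotomic 12 ℚ :=
      (Polynomial.cyclotomic_eq_minpoly_rat hζprim (by norm_num)).symm
    set E : IntermediateField ℚ ℂ := ℚ⟮ζ⟯ with hE_def
    have hEfin : FiniteDimensional ℚ E := IntermediateField.adjoin.finiteDimensional hζint
    have hE4 : finrank ℚ E = 4 := by
      rw [hE_def, IntermediateField.adjoin.finrank hζint, hminζ, Polynomial.natDegree_cyclotomic]
      decide
    -- conjugation closure
    have hζconj : (starRingEnd ℂ) ζ = ζ⁻¹ := by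
      rw [hζ_def, map_pow, ← inv_pow]
      congr 1
      rw [← Complex.exp_conj, ← Complex.exp_neg]
      congr 1
      simp [map_div₀, map_mul, map_ofNat, Complex.conj_I, Complex.conj_ofReal]
      ring
    have hconjE : ∀ z ∈ E, (starRingEnd ℂ) z ∈ E := by
      intro z hz
      have σmem : (starRingEnd ℂ).toRatAlgHom z ∈ E.map (starRingEnd ℂ).toRatAlgHom :=
        ⟨z, hz, rfl⟩
      rw [hE_def, IntermediateField.adjoin_map, Set.image_singleton] at σmem
      have hle : ℚ⟮(starRingEnd ℂ).toRatAlgHom ζ⟯ ≤ E := by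
        rw [IntermediateField.adjoin_simple_le_iff]
        show (starRingEnd ℂ) ζ ∈ E
        rw [hζconj]
        exact inv_mem (IntermediateField.mem_adjoin_simple_self ℚ ζ)
      exact hle σmem
    -- ζ facts as explicit exponential
    have hζe : ζ = Complex.exp (((11 * Real.pi / 6 : ℝ) : ℂ) * Complex.I) := by
      rw [hζ_def, ← Complex.exp_nat_mul]
      congr 1
      push_cast; ring
    have h3sum : ζ + ζ⁻¹ = ((Real.sqrt 3 : ℝ) : ℂ) := by
      rw [hζe, ← Complex.exp_neg,
        show -(((11 * Real.pi / 6 : ℝ) : ℂ) * Complex.I) = ((-(11 * Real.pi / 6) : ℝ) : ℂ) * Complex.I by push_cast; ring,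
        Complex.exp_mul_I, Complex.exp_mul_I,
        ← Complex.ofReal_cos, ← Complex.ofReal_sin, ← Complex.ofReal_cos, ← Complex.ofReal_sin,
        Real.cos_neg, Real.sin_neg,
        show 11 * Real.pi / 6 = 2 * Real.pi - Real.pi / 6 by ring,
        Real.cos_two_pi_sub, Real.cos_pi_div_six]
      push_cast; ring
    have h3E : ((Real.sqrt 3 : ℝ) : ℂ) ∈ E := by
      rw [← h3sum]
      exact add_mem (IntermediateField.mem_adjoin_simple_self ℚ ζ)
        (inv_mem (IntermediateField.mem_adjoin_simple_self ℚ ζ))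
    have hζim : ζ.im = -(1/2) := by
      rw [hζe, Complex.exp_ofReal_mul_I_im,
        show 11 * Real.pi / 6 = 2 * Real.pi - Real.pi / 6 by ring,
        Real.sin_two_pi_sub, Real.sin_pi_div_six]
    -- irrationality facts
    have irr3 : Irrational (Real.sqrt 3) := by
      have h := Nat.prime_three.irrational_sqrt
      simpa using h
    have hns : ∀ k : ℕ, ¬ p ∣ k → ¬ IsSquare (k * p) := by
      rintro k hkp ⟨t, ht⟩
      have hpt : p ∣ t := hp.dvd_of_dvd_pow (n := 2) (by rw [pow_two]; exact ⟨k, by rw [← ht]; ring⟩)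
      obtain ⟨u, rfl⟩ := hpt
      refine hkp ⟨u * u, ?_⟩
      have heq : k * p = (p * (u * u)) * p := by rw [ht]; ring
      exact Nat.eq_of_mul_eq_mul_right hp.pos heq
    have irr2p : Irrational (Real.sqrt 2 * Real.sqrt p) := by
      have h := irrational_sqrt_natCast_iff.2 (hns 2 (fun h =>
        hp2 ((Nat.prime_dvd_prime_iff_eq hp Nat.prime_two).1 h)))
      rwa [show ((2 * p : ℕ) : ℝ) = 2 * (p : ℝ) by push_cast; ring,
        Real.sqrt_mul (by norm_num)] at h
    have irr6p : Irrational (Real.sqrt (6 * p : ℕ)) :=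
      irrational_sqrt_natCast_iff.2 (hns 6 (fun h => by
        rcases (Nat.Prime.dvd_mul hp).1 (show p ∣ 2 * 3 by norm_num; exact h) with h' | h'
        · exact hp2 ((Nat.prime_dvd_prime_iff_eq hp Nat.prime_two).1 h')
        · exact hp3 ((Nat.prime_dvd_prime_iff_eq hp Nat.prime_three).1 h')))
    -- the key non-membership
    have hnotE : α ∉ E := by
      intro hmem
      have hζ8 : ζ ^ 8 = b := by
        rw [hζab, show (a ^ 2 * b ^ 2) ^ 8 = (a ^ 4) ^ 4 * ((b ^ 3) ^ 5 * b) by ring, ha4, hb3]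
        norm_num
      have hbE : b ∈ E := by
        rw [← hζ8]
        exact pow_mem (IntermediateField.mem_adjoin_simple_self ℚ ζ) 8
      have hasE : a * s ∈ E := by
        have he : a * s = α * b⁻¹ := by rw [hα_def]; field_simp
        rw [he]; exact mul_mem hmem (inv_mem hbE)
      have haconj : (starRingEnd ℂ) (a * s) = a⁻¹ * s := by
        rw [map_mul, hs_def, Complex.conj_ofReal, ha_def, ← Complex.exp_conj, ← Complex.exp_neg]
        congr 2
        simp [map_div₀, map_mul, map_ofNat, Complex.conj_I, Complex.conj_ofReal]
        ring
      have haa : a + a⁻¹ = ((Real.sqrt 2 : ℝ) : ℂ) := by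
        rw [ha_def, ← Complex.exp_neg,
          show 2 * (Real.pi : ℂ) * Complex.I / 8 = ((Real.pi / 4 : ℝ) : ℂ) * Complex.I by push_cast; ring,
          show -(((Real.pi / 4 : ℝ) : ℂ) * Complex.I) = ((-(Real.pi / 4) : ℝ) : ℂ) * Complex.I by push_cast; ring,
          Complex.exp_mul_I, Complex.exp_mul_I,
          ← Complex.ofReal_cos, ← Complex.ofReal_sin, ← Complex.ofReal_cos, ← Complex.ofReal_sin,
          Real.cos_neg, Real.sin_neg, Real.cos_pi_div_four]
        push_cast; ring
      have h2pE : ((Real.sqrt 2 * Real.sqrt p : ℝ) : ℂ) ∈ E := by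
        have he : ((Real.sqrt 2 * Real.sqrt p : ℝ) : ℂ) = a * s + (starRingEnd ℂ) (a * s) := by
          rw [haconj, show a * s + a⁻¹ * s = (a + a⁻¹) * s by ring, haa, hs_def]
          push_cast; ring
        rw [he]; exact add_mem hasE (hconjE _ hasE)
      -- build the real quartic field
      set x3 : ℂ := ((Real.sqrt 3 : ℝ) : ℂ) with hx3_def
      set y : ℂ := ((Real.sqrt 2 * Real.sqrt p : ℝ) : ℂ) with hy_def
      have hx3sq : algebraMap ℚ ℂ 3 = x3 ^ 2 := by
        rw [hx3_def, show (((Real.sqrt 3 : ℝ) : ℂ)) ^ 2 = ((Real.sqrt 3 ^ 2 : ℝ) : ℂ) by push_cast; ring,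
          Real.sq_sqrt (by norm_num : (0:ℝ) ≤ 3)]
        norm_num
      obtain ⟨hx3int, hx3deg⟩ := aux_min_deg_two x3 (3 : ℚ) hx3sq (aux_irr irr3)
      have hFfin : FiniteDimensional ℚ (ℚ⟮x3⟯ : IntermediateField ℚ ℂ) :=
        IntermediateField.adjoin.finiteDimensional hx3int
      have hF2 : finrank ℚ (ℚ⟮x3⟯ : IntermediateField ℚ ℂ) = 2 := by
        rw [IntermediateField.adjoin.finrank hx3int, hx3deg]
      have hy2R : (Real.sqrt 2 * Real.sqrt p) ^ 2 = 2 * (p : ℝ) := by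
        rw [mul_pow, Real.sq_sqrt (by norm_num : (0:ℝ) ≤ 2), Real.sq_sqrt hppos.le]
      have hyF : y ∉ (ℚ⟮x3⟯ : IntermediateField ℚ ℂ) := by
        intro hy
        obtain ⟨c0, c1, hrep⟩ := aux_rep_two x3 hx3int hx3deg hy
        rw [hy_def, hx3_def] at hrep
        have hR : (Real.sqrt 2 * Real.sqrt p : ℝ) = (c0 : ℝ) + (c1 : ℝ) * Real.sqrt 3 := by
          exact_mod_cast hrep
        have h3sq : Real.sqrt 3 ^ 2 = 3 := Real.sq_sqrt (by norm_num)
        by_cases hc1 : c1 = 0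
        · exact irr2p ⟨c0, by rw [hR, hc1]; push_cast; ring⟩
        by_cases hc0 : c0 = 0
        · have hsq0 : ((c1 : ℝ) * Real.sqrt 3) ^ 2 = 2 * (p : ℝ) := by
            rw [show ((c1 : ℝ) * Real.sqrt 3) = Real.sqrt 2 * Real.sqrt p from by
              rw [hR, hc0]; push_cast; ring]
            exact hy2R
          have h6 : ((6 * p : ℕ) : ℝ) = (3 * (c1 : ℝ)) ^ 2 := by
            push_cast
            linear_combination (-3 : ℝ) * hsq0 + 3 * (c1 : ℝ) ^ 2 * h3sq
          refine irr6p ⟨|3 * c1|, ?_⟩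
          rw [h6, Real.sqrt_sq_eq_abs]
          push_cast
          try ring
        · have hsq : ((c0 : ℝ) + (c1 : ℝ) * Real.sqrt 3) ^ 2 = 2 * (p : ℝ) := by
            rw [← hR]; exact hy2R
          have key : (2 * (c0 : ℝ) * c1) * Real.sqrt 3 = 2 * p - c0 ^ 2 - 3 * c1 ^ 2 := by
            linear_combination hsq - (c1 : ℝ) ^ 2 * h3sq
          refine irr3 ⟨(2 * p - c0 ^ 2 - 3 * c1 ^ 2) / (2 * c0 * c1), ?_⟩
          push_cast
          rw [div_eq_iff (by
            have h0 : (c0 : ℝ) ≠ 0 := by exact_mod_cast hc0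
            have h1 : (c1 : ℝ) ≠ 0 := by exact_mod_cast hc1
            positivity)]
          linear_combination -key
      have hyc : algebraMap (ℚ⟮x3⟯ : IntermediateField ℚ ℂ) ℂ
          (algebraMap ℚ (ℚ⟮x3⟯ : IntermediateField ℚ ℂ) (2 * (p : ℚ))) = y ^ 2 := by
        rw [← IsScalarTower.algebraMap_apply ℚ (ℚ⟮x3⟯ : IntermediateField ℚ ℂ) ℂ]
        rw [hy_def, show (((Real.sqrt 2 * Real.sqrt p : ℝ) : ℂ)) ^ 2 = (((Real.sqrt 2 * Real.sqrt p) ^ 2 : ℝ) : ℂ) from by push_cast; ring, hy2R]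
        push_cast
        norm_num
      have hyrange : y ∉ Set.range (algebraMap (ℚ⟮x3⟯ : IntermediateField ℚ ℂ) ℂ) := by
        rintro ⟨w, hw⟩
        exact hyF (hw ▸ w.2)
      obtain ⟨hyint, hydeg⟩ := aux_min_deg_two (K := (ℚ⟮x3⟯ : IntermediateField ℚ ℂ)) y (algebraMap ℚ (ℚ⟮x3⟯ : IntermediateField ℚ ℂ) (2 * (p : ℚ))) hyc hyrange
      haveI hFyfin : FiniteDimensional (ℚ⟮x3⟯ : IntermediateField ℚ ℂ) (ℚ⟮x3⟯⟮y⟯) :=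
        IntermediateField.adjoin.finiteDimensional hyint
      have hFy2 : finrank (ℚ⟮x3⟯ : IntermediateField ℚ ℂ) (ℚ⟮x3⟯⟮y⟯) = 2 := by
        rw [IntermediateField.adjoin.finrank hyint, hydeg]
      have hLr : (ℚ⟮x3⟯⟮y⟯).restrictScalars ℚ = IntermediateField.adjoin ℚ {x3, y} :=
        IntermediateField.adjoin_simple_adjoin_simple ℚ x3 y
      have hL4 : finrank ℚ (IntermediateField.adjoin ℚ {x3, y}) = 4 := by
        rw [← hLr]
        have htower : finrank ℚ (ℚ⟮x3⟯ : IntermediateField ℚ ℂ) * finrank (ℚ⟮x3⟯ : IntermediateField ℚ ℂ) (ℚ⟮x3⟯⟮y⟯) = finrank ℚ ((ℚ⟮x3⟯⟮y⟯).restrictScalars ℚ) :=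
          Module.finrank_mul_finrank ℚ (ℚ⟮x3⟯ : IntermediateField ℚ ℂ) (ℚ⟮x3⟯⟮y⟯)
        rw [← htower, hF2, hFy2]
      have hLE : IntermediateField.adjoin ℚ {x3, y} ≤ E := by
        rw [IntermediateField.adjoin_le_iff]
        intro z hz
        rcases hz with rfl | hz
        · exact h3E
        · rcases hz with rfl
          exact h2pE
      have hLeqE : IntermediateField.adjoin ℚ {x3, y} = E :=
        IntermediateField.eq_of_le_of_finrank_eq hLE (by rw [hL4, hE4])
      have hζL : ζ ∈ IntermediateField.adjoin ℚ {x3, y} := by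
        rw [hLeqE]
        exact IntermediateField.mem_adjoin_simple_self ℚ ζ
      -- but that field is real
      have hRf : ∀ q : ℚ, algebraMap ℚ ℂ q ∈ Complex.ofRealHom.fieldRange :=
        fun q => ⟨(q : ℝ), by norm_num⟩
      have hLreal : IntermediateField.adjoin ℚ {x3, y} ≤
          Subfield.toIntermediateField Complex.ofRealHom.fieldRange hRf := by
        rw [IntermediateField.adjoin_le_iff]
        intro z hz
        rcases hz with rfl | hz
        · exact ⟨Real.sqrt 3, rfl⟩
        · rcases hz with rfl
          exact ⟨Real.sqrt 2 * Real.sqrt p, rfl⟩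
      obtain ⟨r, hr⟩ := hLreal hζL
      have : ζ.im = 0 := by rw [← hr]; rfl
      rw [hζim] at this
      norm_num at this
    -- main computation
    set f : ℚ[X] := X ^ 8 - C ((p : ℚ)) ^ 2 * X ^ 4 + C ((p : ℚ)) ^ 4 with hf_def
    have hfmonic : f.Monic := by rw [hf_def]; monicity!
    have hfdeg : f.natDegree = 8 := by rw [hf_def]; compute_degree!
    have hα4 : α ^ 4 = -b * (p : ℂ) ^ 2 := by
      rw [hα_def, show (a * b * s) ^ 4 = a ^ 4 * (b ^ 3 * b) * (s ^ 2) ^ 2 by ring, ha4, hb3, hs2]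
      ring
    have hfval : Polynomial.aeval α f = 0 := by
      rw [hf_def]
      simp only [map_add, map_sub, map_pow, map_mul, Polynomial.aeval_X, Polynomial.aeval_C]
      have hcast : (algebraMap ℚ ℂ) ((p : ℚ)) = (p : ℂ) := by norm_num
      rw [hcast, show α ^ 8 = (α ^ 4) ^ 2 by ring, hα4]
      linear_combination ((p : ℂ) ^ 4) * hb1
    have hαint : IsIntegral ℚ α := ⟨f, hfmonic, by rw [← Polynomial.aeval_def]; exact hfval⟩
    have hα2ζ : α ^ 2 = ζ * (p : ℂ) := by
      rw [hζab, hα_def, show (a * b * s) ^ 2 = a ^ 2 * b ^ 2 * s ^ 2 by ring, hs2]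
    have hp0 : (p : ℂ) ≠ 0 := Nat.cast_ne_zero.2 hp.ne_zero
    have hpmem : ∀ K : IntermediateField ℚ ℂ, (p : ℂ) ∈ K := by
      intro K
      rw [show (p : ℂ) = algebraMap ℚ ℂ ((p : ℚ)) from by norm_num]
      exact K.algebraMap_mem _
    have hζα : ζ ∈ (ℚ⟮α⟯ : IntermediateField ℚ ℂ) := by
      rw [show ζ = α ^ 2 * ((p : ℂ))⁻¹ from by rw [hα2ζ]; field_simp]
      exact mul_mem (pow_mem (IntermediateField.mem_adjoin_simple_self ℚ α) 2)
        (inv_mem (hpmem _))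
    have hαrange : α ∉ Set.range (algebraMap E ℂ) := by
      rintro ⟨w, hw⟩; exact hnotE (hw ▸ w.2)
    have hα2E : α ^ 2 ∈ E := by
      rw [hα2ζ]
      exact mul_mem (IntermediateField.mem_adjoin_simple_self ℚ ζ) (hpmem E)
    obtain ⟨hαintE, hαdegE⟩ := aux_min_deg_two (K := E) α ⟨α ^ 2, hα2E⟩ rfl hαrange
    haveI hEαfin : FiniteDimensional E (E⟮α⟯) := IntermediateField.adjoin.finiteDimensional hαintE
    have hEα2 : finrank E (E⟮α⟯) = 2 := by
      rw [IntermediateField.adjoin.finrank hαintE, hαdegE]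
    have hrs : (E⟮α⟯).restrictScalars ℚ = ℚ⟮α⟯ := by
      erw [IntermediateField.restrictScalars_adjoin]
      apply le_antisymm
      · rw [IntermediateField.adjoin_le_iff]
        rintro z (hz | hz)
        · exact (IntermediateField.adjoin_simple_le_iff.2 hζα) hz
        · rcases hz
          exact IntermediateField.mem_adjoin_simple_self ℚ α
      · rw [IntermediateField.adjoin_le_iff]
        rintro z hz
        rcases hz
        exact IntermediateField.subset_adjoin _ _ (Or.inr rfl)
    have h8 : finrank ℚ (ℚ⟮α⟯ : IntermediateField ℚ ℂ) = 8 := by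
      rw [← hrs]
      have htower : finrank ℚ E * finrank E (E⟮α⟯) = finrank ℚ ((E⟮α⟯).restrictScalars ℚ) :=
        Module.finrank_mul_finrank ℚ E (E⟮α⟯)
      rw [← htower, hE4, hEα2]
    have hmindeg : (minpoly ℚ α).natDegree = 8 := by
      have hfr := IntermediateField.adjoin.finrank hαint
      rw [h8] at hfr
      exact hfr.symm
    have hdvd : minpoly ℚ α ∣ f := minpoly.dvd ℚ α hfval
    obtain ⟨g, hg⟩ := hdvd
    have hf0 : f ≠ 0 := hfmonic.ne_zero
    have hg0 : g ≠ 0 := by rintro rfl; rw [mul_zero] at hg; exact hf0 hg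
    have hdegg : g.natDegree = 0 := by
      have hnd := Polynomial.natDegree_mul (minpoly.ne_zero hαint) hg0
      rw [← hg, hfdeg, hmindeg] at hnd
      omega
    have hgm : g.Monic := by
      have hl := Polynomial.leadingCoeff_mul (minpoly ℚ α) g
      rw [← hg, hfmonic.leadingCoeff, (minpoly.monic hαint).leadingCoeff, one_mul] at hl
      exact hl.symm
    have hg1 : g = 1 := hgm.natDegree_eq_zero.mp hdegg
    have hfeq : f = minpoly ℚ α := by rw [hg, hg1, mul_one]
    rw [hfeq]
    exact minpoly.irreducible hαint
  · -- root set
    have hbprim : IsPrimitiveRoot b 3 := Complex.isPrimitiveRoot_exp 3 (by norm_num)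
    have hbi : b⁻¹ = b ^ 2 := inv_eq_of_mul_eq_one_right (by linear_combination hb3)
    have hb0 : b ≠ 0 := Complex.exp_ne_zero _
    set r : ℂ := a * b * s with hr_def
    set r' : ℂ := a * b ^ 2 * s with hr'_def
    have hfac : ∀ z : ℂ, z ^ 8 - (p : ℂ) ^ 2 * z ^ 4 + (p : ℂ) ^ 4
        = ((z - r) * (z + r) * (z - a ^ 2 * r) * (z + a ^ 2 * r)) *
          ((z - r') * (z + r') * (z - a ^ 2 * r') * (z + a ^ 2 * r')) := by
      intro z
      have h1 : z ^ 8 - (p : ℂ) ^ 2 * z ^ 4 + (p : ℂ) ^ 4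
          = (z ^ 4 + b * (p:ℂ) ^ 2) * (z ^ 4 + b ^ 2 * (p:ℂ) ^ 2) := by
        linear_combination (-(p:ℂ)^2*z^4) * hb1 + (-(p:ℂ)^4) * hb3
      have h2 : z ^ 4 + b * (p:ℂ) ^ 2 = (z - r) * (z + r) * (z - a ^ 2 * r) * (z + a ^ 2 * r) := by
        rw [hr_def]
        linear_combination (b^4*s^4 + z^2*b^2*s^2*a^2 - b^4*s^4*a^4) * ha4 - b^4*(s^2+(p:ℂ)) * hs2 - b*(p:ℂ)^2 * hb3
      have h3 : z ^ 4 + b ^ 2 * (p:ℂ) ^ 2 = (z - r') * (z + r') * (z - a ^ 2 * r') * (z + a ^ 2 * r') := by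
        rw [hr'_def]
        linear_combination (b^8*s^4 + z^2*b^4*s^2*a^2 - b^8*s^4*a^4) * ha4 - b^8*(s^2+(p:ℂ)) * hs2 - (b^2*(p:ℂ)^2*(b^3+1)) * hb3
      rw [h1, h2, h3]
    ext z
    simp only [Set.mem_setOf_eq]
    rw [hfac z]
    simp only [hbi, mul_eq_zero, sub_eq_zero, add_eq_zero_iff_eq_neg]
    constructor
    · rintro ((((h | h) | h) | h) | ((h | h) | h) | h)
      · exact ⟨0, Or.inl (by rw [h, hr_def]; norm_num)⟩
      · exact ⟨2, Or.inl (by rw [h, hr_def]; norm_num; linear_combination (-(a*b*s)) * ha4)⟩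
      · exact ⟨1, Or.inl (by rw [h, hr_def]; norm_num; ring)⟩
      · exact ⟨3, Or.inl (by rw [h, hr_def, show ((3:Fin 4):ℕ) = 3 from rfl]; norm_num; linear_combination (-(a^3*b*s)) * ha4)⟩
      · exact ⟨0, Or.inr (by rw [h, hr'_def]; norm_num)⟩
      · exact ⟨2, Or.inr (by rw [h, hr'_def]; norm_num; linear_combination (-(a*b^2*s)) * ha4)⟩
      · exact ⟨1, Or.inr (by rw [h, hr'_def]; norm_num; ring)⟩
      · exact ⟨3, Or.inr (by rw [h, hr'_def, show ((3:Fin 4):ℕ) = 3 from rfl]; norm_num; linear_combination (-(a^3*b^2*s)) * ha4)⟩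
    · rintro ⟨m, h | h⟩ <;> fin_cases m <;> norm_num at h
      · exact Or.inl (Or.inl (Or.inl (Or.inl h)))
      · refine Or.inl (Or.inl (Or.inr ?_))
        rw [h, hr_def]; ring
      · refine Or.inl (Or.inl (Or.inl (Or.inr ?_)))
        rw [h, hr_def]; linear_combination (a*b*s) * ha4
      · refine Or.inl (Or.inr ?_)
        rw [h, hr_def]; linear_combination (a^3*b*s) * ha4
      · exact Or.inr (Or.inl (Or.inl (Or.inl h)))
      · refine Or.inr (Or.inl (Or.inr ?_))
        rw [h, hr'_def]; ring
      · refine Or.inr (Or.inl (Or.inl (Or.inr ?_)))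
        rw [h, hr'_def]; linear_combination (a*b^2*s) * ha4
      · refine Or.inr (Or.inr ?_)
        rw [h, hr'_def]; linear_combination (a^3*b^2*s) * ha4
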